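/- The function σ on positive n×n matrices defined by σ(X) = Πᵢ (λᵢ μᵢ), where X = (y_{ij} λᵢ μⱼ) is the doubly stochastic scaling decomposition of X, satisfies the variational formula n^n σ(X) = (min Σ_{i,j} x_{ij} ξᵢ ηⱼ)^n, where the minimum is over positive ξᵢ, ηⱼ with Πᵢ ξᵢ = Πⱼ ηⱼ = 1. In particular, σ is monotone: if x_{ij} ≤ y_{ij} for all i,j then σ(X) ≤ σ(Y). -/

import Mathlib

open Finset

private lemma sigma_isLeast (n : ℕ) (hn : 0 < n)
    (X Y : Matrix (Fin n) (Fin n) ℝ) (lam mu : Fin n → ℝ)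
    (hlam : ∀ i, 0 < lam i) (hmu : ∀ j, 0 < mu j)
    (hscal : ∀ i j, X i j = Y i j * lam i * mu j)
    (hYnonneg : ∀ i j, 0 ≤ Y i j)
    (hYrow : ∀ i, ∑ j, Y i j = 1) (hYcol : ∀ j, ∑ i, Y i j = 1) :
    IsLeast {v : ℝ | ∃ ξ η : Fin n → ℝ, (∀ i, 0 < ξ i) ∧ (∀ j, 0 < η j) ∧
        (∏ i, ξ i) = 1 ∧ (∏ j, η j) = 1 ∧ v = ∑ i, ∑ j, X i j * ξ i * η j}
      ((n : ℝ) * (∏ i, lam i * mu i) ^ ((n : ℝ)⁻¹)) := by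
  have hnR : (0 : ℝ) < n := by exact_mod_cast hn
  have hPlam : (0 : ℝ) < ∏ i, lam i := Finset.prod_pos fun i _ => hlam i
  have hPmu : (0 : ℝ) < ∏ j, mu j := Finset.prod_pos fun j _ => hmu j
  have hPsplit : (∏ i, lam i * mu i) = (∏ i, lam i) * ∏ j, mu j :=
    Finset.prod_mul_distrib
  constructor
  · -- membership: the minimizing ξ, η
    set g : ℝ := (∏ i, lam i) ^ ((n : ℝ)⁻¹) with hg
    set h : ℝ := (∏ j, mu j) ^ ((n : ℝ)⁻¹) with hh
    have hgpos : 0 < g := Real.rpow_pos_of_pos hPlam _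
    have hhpos : 0 < h := Real.rpow_pos_of_pos hPmu _
    refine ⟨fun i => g / lam i, fun j => h / mu j, fun i => div_pos hgpos (hlam i),
      fun j => div_pos hhpos (hmu j), ?_, ?_, ?_⟩
    · rw [Finset.prod_div_distrib, Finset.prod_const, Finset.card_univ, Fintype.card_fin,
        Real.rpow_inv_natCast_pow hPlam.le hn.ne', div_self hPlam.ne']
    · rw [Finset.prod_div_distrib, Finset.prod_const, Finset.card_univ, Fintype.card_fin,
        Real.rpow_inv_natCast_pow hPmu.le hn.ne', div_self hPmu.ne']
    · have : ∀ i j, X i j * (g / lam i) * (h / mu j) = Y i j * (g * h) := by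
        intro i j
        have hne : lam i * mu j ≠ 0 := (mul_pos (hlam i) (hmu j)).ne'
        have hl : lam i ≠ 0 := (hlam i).ne'
        have hm : mu j ≠ 0 := (hmu j).ne'
        rw [hscal i j]
        field_simp
      calc (n : ℝ) * (∏ i, lam i * mu i) ^ ((n : ℝ)⁻¹)
          = (n : ℝ) * (g * h) := by
            rw [hPsplit, Real.mul_rpow hPlam.le hPmu.le]
        _ = ∑ i, ∑ j : Fin n, Y i j * (g * h) := by
            simp only [← Finset.sum_mul, hYrow, one_mul, Finset.sum_const,
              Finset.card_univ, Fintype.card_fin, nsmul_eq_mul]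
            ring
        _ = ∑ i, ∑ j, X i j * (g / lam i) * (h / mu j) := by
            refine Finset.sum_congr rfl fun i _ => Finset.sum_congr rfl fun j _ => ?_
            rw [this i j]
  · -- lower bound via AM-GM
    rintro v ⟨ξ, η, hξ, hη, hξp, hηp, rfl⟩
    set c : Fin n → ℝ := fun i => lam i * ξ i with hc
    set d : Fin n → ℝ := fun j => mu j * η j with hd
    have hcpos : ∀ i, 0 < c i := fun i => mul_pos (hlam i) (hξ i)
    have hdpos : ∀ j, 0 < d j := fun j => mul_pos (hmu j) (hη j)
    have key := Real.geom_mean_le_arith_mean_weighted (Finset.univ : Finset (Fin n × Fin n))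
      (fun p => Y p.1 p.2 / n) (fun p => c p.1 * d p.2)
      (fun p _ => div_nonneg (hYnonneg p.1 p.2) hnR.le)
      (by
        rw [Fintype.sum_prod_type]
        simp only [← Finset.sum_div, hYrow, Finset.sum_const, Finset.card_univ,
          Fintype.card_fin, nsmul_eq_mul, mul_one]
        field_simp)
      (fun p _ => (mul_pos (hcpos p.1) (hdpos p.2)).le)
    -- rewrite LHS of key
    have hLHS : (∏ p : Fin n × Fin n, (c p.1 * d p.2) ^ (Y p.1 p.2 / (n : ℝ)))
        = (∏ i, lam i * mu i) ^ ((n : ℝ)⁻¹) := by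
      have h1 : ∀ p : Fin n × Fin n, (c p.1 * d p.2) ^ (Y p.1 p.2 / (n : ℝ))
          = c p.1 ^ (Y p.1 p.2 / (n : ℝ)) * d p.2 ^ (Y p.1 p.2 / (n : ℝ)) := fun p =>
        Real.mul_rpow (hcpos p.1).le (hdpos p.2).le
      rw [Finset.prod_congr rfl fun p _ => h1 p, Finset.prod_mul_distrib]
      have h2 : (∏ p : Fin n × Fin n, c p.1 ^ (Y p.1 p.2 / (n : ℝ)))
          = (∏ i, lam i) ^ ((n : ℝ)⁻¹) := by
        rw [Fintype.prod_prod_type]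
        have : ∀ i : Fin n, (∏ j, c i ^ (Y i j / (n : ℝ))) = c i ^ ((n : ℝ)⁻¹) := by
          intro i
          rw [← Real.rpow_sum_of_pos (hcpos i), ← Finset.sum_div, hYrow i, one_div]
        rw [Finset.prod_congr rfl fun i _ => this i,
          Real.finset_prod_rpow _ _ (fun i _ => (hcpos i).le)]
        have : (∏ i, c i) = ∏ i, lam i := by
          rw [hc]
          simp only []
          rw [Finset.prod_mul_distrib, hξp, mul_one]
        rw [this]
      have h3 : (∏ p : Fin n × Fin n, d p.2 ^ (Y p.1 p.2 / (n : ℝ)))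
          = (∏ j, mu j) ^ ((n : ℝ)⁻¹) := by
        rw [Fintype.prod_prod_type, Finset.prod_comm]
        have : ∀ j : Fin n, (∏ i, d j ^ (Y i j / (n : ℝ))) = d j ^ ((n : ℝ)⁻¹) := by
          intro j
          rw [← Real.rpow_sum_of_pos (hdpos j), ← Finset.sum_div, hYcol j, one_div]
        rw [Finset.prod_congr rfl fun j _ => this j,
          Real.finset_prod_rpow _ _ (fun j _ => (hdpos j).le)]
        have : (∏ j, d j) = ∏ j, mu j := by
          rw [hd]
          simp only []
          rw [Finset.prod_mul_distrib, hηp, mul_one]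
        rw [this]
      rw [h2, h3, hPsplit, Real.mul_rpow hPlam.le hPmu.le]
    -- rewrite RHS of key
    have hRHS : (∑ p : Fin n × Fin n, (Y p.1 p.2 / n) * (c p.1 * d p.2))
        = (∑ i, ∑ j, X i j * ξ i * η j) / n := by
      have hpt : ∀ p : Fin n × Fin n,
          Y p.1 p.2 / n * (c p.1 * d p.2) = X p.1 p.2 * ξ p.1 * η p.2 / n := by
        intro p
        rw [hscal p.1 p.2]
        simp only [hc, hd]
        ring
      rw [Finset.sum_congr rfl fun p _ => hpt p, ← Finset.sum_div,
        Fintype.sum_prod_type]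
    rw [hLHS, hRHS] at key
    rw [mul_comm, ← le_div_iff₀ hnR]
    exact key

/-- For a positive `n × n` matrix `X` with doubly stochastic scaling decomposition
`x_{ij} = y_{ij} λᵢ μⱼ`, the quantity `σ(X) = Πᵢ λᵢ μᵢ` satisfies the variational
formula `n^n σ(X) = (min Σ_{i,j} x_{ij} ξᵢ ηⱼ)^n`, the minimum taken over positive
`ξ, η` with `Π ξᵢ = Π ηⱼ = 1`.  In particular `σ` is entrywise monotone. -/
theorem sigma_variational_and_monotone (n : ℕ) (hn : 0 < n)
    (X Y : Matrix (Fin n) (Fin n) ℝ) (lam mu : Fin n → ℝ)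
    (hXpos : ∀ i j, 0 < X i j)
    (hlam : ∀ i, 0 < lam i) (hmu : ∀ j, 0 < mu j)
    (hscal : ∀ i j, X i j = Y i j * lam i * mu j)
    (hYnonneg : ∀ i j, 0 ≤ Y i j)
    (hYrow : ∀ i, ∑ j, Y i j = 1) (hYcol : ∀ j, ∑ i, Y i j = 1) :
    (∃ m : ℝ, IsLeast {v : ℝ | ∃ ξ η : Fin n → ℝ, (∀ i, 0 < ξ i) ∧ (∀ j, 0 < η j) ∧
        (∏ i, ξ i) = 1 ∧ (∏ j, η j) = 1 ∧ v = ∑ i, ∑ j, X i j * ξ i * η j} m ∧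
      (n : ℝ) ^ n * ∏ i, lam i * mu i = m ^ n) ∧
    (∀ (X' Y' : Matrix (Fin n) (Fin n) ℝ) (lam' mu' : Fin n → ℝ),
      (∀ i j, 0 < X' i j) →
      (∀ i, 0 < lam' i) → (∀ j, 0 < mu' j) →
      (∀ i j, X' i j = Y' i j * lam' i * mu' j) →
      (∀ i j, 0 ≤ Y' i j) →
      (∀ i, ∑ j, Y' i j = 1) → (∀ j, ∑ i, Y' i j = 1) →
      (∀ i j, X i j ≤ X' i j) →
      ∏ i, lam i * mu i ≤ ∏ i, lam' i * mu' i) := by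
  have hnR : (0 : ℝ) < n := by exact_mod_cast hn
  have hPpos : 0 < ∏ i, lam i * mu i :=
    Finset.prod_pos fun i _ => mul_pos (hlam i) (hmu i)
  have hL := sigma_isLeast n hn X Y lam mu hlam hmu hscal hYnonneg hYrow hYcol
  constructor
  · refine ⟨_, hL, ?_⟩
    rw [mul_pow, Real.rpow_inv_natCast_pow hPpos.le hn.ne']
  · intro X' Y' lam' mu' hX'pos hlam' hmu' hscal' hY'nonneg hY'row hY'col hle
    have hP'pos : 0 < ∏ i, lam' i * mu' i :=
      Finset.prod_pos fun i _ => mul_pos (hlam' i) (hmu' i)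
    have hL' := sigma_isLeast n hn X' Y' lam' mu' hlam' hmu' hscal' hY'nonneg hY'row hY'col
    -- the minimum for X is at most the minimum for X'
    obtain ⟨ξ, η, hξ, hη, hξp, hηp, heq⟩ := hL'.1
    have h1 : (n : ℝ) * (∏ i, lam i * mu i) ^ ((n : ℝ)⁻¹) ≤
        ∑ i, ∑ j, X i j * ξ i * η j :=
      hL.2 ⟨ξ, η, hξ, hη, hξp, hηp, rfl⟩
    have h2 : (∑ i, ∑ j, X i j * ξ i * η j) ≤ ∑ i, ∑ j, X' i j * ξ i * η j :=
      Finset.sum_le_sum fun i _ => Finset.sum_le_sum fun j _ =>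
        mul_le_mul_of_nonneg_right
          (mul_le_mul_of_nonneg_right (hle i j) (hξ i).le) (hη j).le
    have hmm : (n : ℝ) * (∏ i, lam i * mu i) ^ ((n : ℝ)⁻¹) ≤
        (n : ℝ) * (∏ i, lam' i * mu' i) ^ ((n : ℝ)⁻¹) := by
      rw [← heq] at h2
      exact h1.trans h2
    have h3 : (∏ i, lam i * mu i) ^ ((n : ℝ)⁻¹) ≤
        (∏ i, lam' i * mu' i) ^ ((n : ℝ)⁻¹) := (mul_le_mul_iff_right₀ hnR).mp hmm
    have h4 := pow_le_pow_left₀ (Real.rpow_nonneg hPpos.le _) h3 n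
    rwa [Real.rpow_inv_natCast_pow hPpos.le hn.ne',
      Real.rpow_inv_natCast_pow hP'pos.le hn.ne'] at h4
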